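/- arXiv:0911.4835 — 2 statements merged into one kernel-verified Lean document; each statement's English description precedes it below -/
import Mathlib

section
/- Let M = N × ℝ where N is a closed manifold, and let F : N × ℝ → N be continuous with F_t := F(·,t) a homeomorphism of N for each t, F_t = id for t ∉ (0,1). Suppose for some x₀ ∈ N the loop t ↦ F(x₀,t), t ∈ [0,1], is not null-homotopic in N. Then the compactly supported homeomorphism f(x,t) = (F(x,t), t) of N × ℝ is not isotopic to the identity by any isotopy with compact support. -/
/-- Example 2.10: let `N` be a closed manifold and `F_t` a loop of homeomorphisms of
`N` (with `F_t = id` for `t ∉ (0,1)`) whose trace loop `t ↦ F_t x₀` at some point `x₀`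
is not null-homotopic. Then the compactly supported homeomorphism
`f(x,t) = (F_t x, t)` of `N × ℝ` is not isotopic to the identity by any isotopy with
compact support. -/
theorem dehn_twist_not_compactly_isotopic
    {N : Type*} [TopologicalSpace N] [CompactSpace N]
    (F : ℝ → (N ≃ₜ N))
    (hFcont : Continuous (fun p : N × ℝ => F p.2 p.1))
    (hFid : ∀ t ∉ Set.Ioo (0 : ℝ) 1, F t = Homeomorph.refl N)
    (x₀ : N)
    (hloop : ∀ γ : Path x₀ x₀, (∀ t : unitInterval, γ t = F (t : ℝ) x₀) →
      ¬ γ.Homotopic (Path.refl x₀))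
    (f : (N × ℝ) ≃ₜ (N × ℝ))
    (hf : ∀ p : N × ℝ, f p = (F p.2 p.1, p.2)) :
    ¬ ∃ H : ℝ → ((N × ℝ) ≃ₜ (N × ℝ)),
        Continuous (fun q : (N × ℝ) × ℝ => H q.2 q.1) ∧
        H 0 = Homeomorph.refl _ ∧
        H 1 = f ∧
        ∃ K : Set (N × ℝ), IsCompact K ∧
          ∀ s ∈ Set.Icc (0 : ℝ) 1, ∀ p ∉ K, H s p = p := by
  rintro ⟨H, hHcont, hH0, hH1, K, hKc, hKsupp⟩
  -- the trace map
  set g : ℝ → N := fun t => F t x₀ with hg_def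
  have hg : Continuous g :=
    hFcont.comp (continuous_const.prodMk continuous_id)
  have hgid : ∀ t : ℝ, t ∉ Set.Ioo (0 : ℝ) 1 → g t = x₀ := by
    intro t ht
    simp [hg_def, hFid t ht]
  have hgle : ∀ t : ℝ, t ≤ 0 → g t = x₀ := fun t ht =>
    hgid t (fun hm => absurd hm.1 (not_lt.mpr ht))
  have hgge : ∀ t : ℝ, 1 ≤ t → g t = x₀ := fun t ht =>
    hgid t (fun hm => absurd hm.2 (not_lt.mpr ht))
  -- bound the support
  obtain ⟨T, hT⟩ := (hKc.image (continuous_abs.comp continuous_snd)).bddAbove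
  obtain ⟨A, hA1, hnotK⟩ :
      ∃ A : ℝ, 1 < A ∧ ∀ (x : N) (t : ℝ), A ≤ |t| → (x, t) ∉ K := by
    refine ⟨max T 1 + 1, by
      have : (1 : ℝ) ≤ max T 1 := le_max_right _ _
      linarith, ?_⟩
    intro x t ht hmem
    have h1 : |t| ≤ T := hT ⟨(x, t), hmem, rfl⟩
    have h2 : T ≤ max T 1 := le_max_left _ _
    linarith
  have hA0 : (0 : ℝ) < A := by linarith
  -- the reparametrizing map
  set L : ℝ → ℝ := fun t => (2 * t - 1) * A with hL_def
  have hL0 : L 0 = -A := by simp [hL_def]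
  have hL1 : L 1 = A := by simp [hL_def]; ring
  -- the trace loop
  set γ : Path x₀ x₀ :=
    { toFun := fun t => g (t : ℝ)
      continuous_toFun := hg.comp continuous_subtype_val
      source' := by
        show g ((0 : unitInterval) : ℝ) = x₀
        rw [Set.Icc.coe_zero]; exact hgle 0 le_rfl
      target' := by
        show g ((1 : unitInterval) : ℝ) = x₀
        rw [Set.Icc.coe_one]; exact hgge 1 le_rfl } with hγ_def
  -- the stretched trace loop
  set δ : Path x₀ x₀ :=
    { toFun := fun t => g (L (t : ℝ))
      continuous_toFun := hg.comp ((by fun_prop : Continuous L).comp continuous_subtype_val)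
      source' := by
        show g (L ((0 : unitInterval) : ℝ)) = x₀
        rw [Set.Icc.coe_zero, hL0]; exact hgle (-A) (by linarith)
      target' := by
        show g (L ((1 : unitInterval) : ℝ)) = x₀
        rw [Set.Icc.coe_one, hL1]; exact hgge A hA1.le } with hδ_def
  -- homotopy from γ to δ (linear reparametrization in ℝ)
  have h1 : γ.Homotopic δ := by
    refine ⟨{ toFun := fun q => g ((1 - (q.1 : ℝ)) * (q.2 : ℝ) + (q.1 : ℝ) * L (q.2 : ℝ))
              continuous_toFun := hg.comp (by fun_prop)
              map_zero_left := by
                intro t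
                show g _ = γ t
                rw [Set.Icc.coe_zero]
                norm_num
                rfl
              map_one_left := by
                intro t
                show g _ = δ t
                rw [Set.Icc.coe_one]
                norm_num
                rfl
              prop' := ?_ }⟩
    intro s x hx
    have hs0 : (0 : ℝ) ≤ (s : ℝ) := s.2.1
    have hs1 : (s : ℝ) ≤ 1 := s.2.2
    simp only [Set.mem_insert_iff, Set.mem_singleton_iff] at hx
    rcases hx with rfl | rfl
    · show g _ = γ 0
      rw [γ.source]
      apply hgle
      rw [Set.Icc.coe_zero]
      simp only [hL_def]
      nlinarith [mul_nonneg hs0 hA0.le]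
    · show g _ = γ 1
      rw [γ.target]
      apply hgge
      rw [Set.Icc.coe_one]
      simp only [hL_def]
      nlinarith [mul_nonneg hs0 (by linarith : (0:ℝ) ≤ A - 1)]
  -- homotopy from δ to the constant loop, via the isotopy H
  have h2 : δ.Homotopic (Path.refl x₀) := by
    refine ⟨{ toFun := fun q => (H (1 - (q.1 : ℝ)) (x₀, L (q.2 : ℝ))).1
              continuous_toFun := by
                have : Continuous fun q : unitInterval × unitInterval =>
                    (((x₀, L (q.2 : ℝ)) : N × ℝ), (1 - (q.1 : ℝ))) := by fun_prop
                exact (hHcont.comp this).fst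
              map_zero_left := by
                intro t
                simp only [Set.Icc.coe_zero, sub_zero, hH1, hf]
                rfl
              map_one_left := by
                intro t
                simp only [Set.Icc.coe_one, sub_self, hH0]
                rfl
              prop' := ?_ }⟩
    intro s x hx
    have hs0 : (0 : ℝ) ≤ (s : ℝ) := s.2.1
    have hs1 : (s : ℝ) ≤ 1 := s.2.2
    have hsmem : (1 - (s : ℝ)) ∈ Set.Icc (0 : ℝ) 1 := ⟨by linarith, by linarith⟩
    simp only [Set.mem_insert_iff, Set.mem_singleton_iff] at hx
    rcases hx with rfl | rfl
    · show (H (1 - (s : ℝ)) (x₀, L ((0 : unitInterval) : ℝ))).1 = δ 0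
      rw [δ.source]
      have hfix : H (1 - (s : ℝ)) (x₀, L 0) = (x₀, L 0) := by
        refine hKsupp _ hsmem _ ?_
        rw [hL0]
        exact hnotK x₀ (-A) (by rw [abs_neg, abs_of_pos hA0])
      rw [Set.Icc.coe_zero, hfix]
    · show (H (1 - (s : ℝ)) (x₀, L ((1 : unitInterval) : ℝ))).1 = δ 1
      rw [δ.target]
      have hfix : H (1 - (s : ℝ)) (x₀, L 1) = (x₀, L 1) := by
        refine hKsupp _ hsmem _ ?_
        rw [hL1]
        exact hnotK x₀ A (by rw [abs_of_pos hA0])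
      rw [Set.Icc.coe_one, hfix]
  exact hloop γ (fun t => rfl) (h1.trans h2)
end

section
/- Let g : N × (0,1] → N × (0,1] be a homeomorphism of the form g(x,s) = (x, σ(x,s)) with σ(x,s) ≤ s for all (x,s) and σ(x,s) < s for all (x,s) in the compact set C = N × [1/3, 1/2], where N is a compact space. Then there exists a positive integer p such that g^p(N × (0,1/2]) ⊆ N × (0,1/3]. -/
/-- Compactness argument at the end of the proof of Proposition 2.7: a fiber-preserving
homeomorphism `g` of `N × (0,1]` that does not increase the second coordinate, and
strictly decreases it on the compact set `N × [1/3, 1/2]`, has an iterate carrying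
`N × (0,1/2]` into `N × (0,1/3]`. -/
theorem iterate_pushes_product_end
    {N : Type*} [TopologicalSpace N] [CompactSpace N]
    (g : (N × Set.Ioc (0 : ℝ) 1) ≃ₜ (N × Set.Ioc (0 : ℝ) 1))
    (hfib : ∀ q, (g q).1 = q.1)
    (hle : ∀ q, ((g q).2 : ℝ) ≤ (q.2 : ℝ))
    (hlt : ∀ q : N × Set.Ioc (0 : ℝ) 1,
      (q.2 : ℝ) ∈ Set.Icc (1 / 3 : ℝ) (1 / 2) → ((g q).2 : ℝ) < (q.2 : ℝ)) :
    ∃ p : ℕ, ∀ q : N × Set.Ioc (0 : ℝ) 1,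
      (q.2 : ℝ) ≤ 1 / 2 → (((g : N × Set.Ioc (0 : ℝ) 1 → N × Set.Ioc (0 : ℝ) 1)^[p] q).2 : ℝ) ≤ 1 / 3 := by
  rcases isEmpty_or_nonempty N with hN | hN
  · exact ⟨1, fun q _ => (hN.false q.1).elim⟩
  -- the compact annulus
  set S : Set (Set.Ioc (0:ℝ) 1) := {s | (s : ℝ) ∈ Set.Icc (1/3 : ℝ) (1/2)} with hS
  have hScomp : IsCompact S := by
    rw [Topology.IsEmbedding.subtypeVal.isCompact_iff]
    have : (Subtype.val : Set.Ioc (0:ℝ) 1 → ℝ) '' S = Set.Icc (1/3 : ℝ) (1/2) := by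
      apply Set.Subset.antisymm
      · rintro x ⟨s, hs, rfl⟩; exact hs
      · rintro x hx
        refine ⟨⟨x, ⟨by linarith [hx.1], by linarith [hx.2]⟩⟩, hx, rfl⟩
    rw [this]
    exact isCompact_Icc
  set C : Set (N × Set.Ioc (0:ℝ) 1) := Set.univ ×ˢ S with hC
  have hCcomp : IsCompact C := isCompact_univ.prod hScomp
  have hCne : C.Nonempty := by
    obtain ⟨x⟩ := hN
    refine ⟨(x, ⟨1/2, by constructor <;> norm_num⟩), Set.mem_univ _, ?_⟩
    constructor <;> norm_num
  -- the continuous drop function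
  have hcont : Continuous fun q : N × Set.Ioc (0:ℝ) 1 => ((q.2 : ℝ) - ((g q).2 : ℝ)) := by
    apply Continuous.sub
    · exact continuous_subtype_val.comp continuous_snd
    · exact continuous_subtype_val.comp (continuous_snd.comp g.continuous)
  obtain ⟨q₀, hq₀C, hq₀min⟩ := hCcomp.exists_isMinOn hCne hcont.continuousOn
  set δ : ℝ := (q₀.2 : ℝ) - ((g q₀).2 : ℝ) with hδ
  have hδpos : 0 < δ := by
    have := hlt q₀ hq₀C.2
    simp only [hδ]
    linarith
  have key : ∀ k : ℕ, ∀ q : N × Set.Ioc (0:ℝ) 1, (q.2 : ℝ) ≤ 1/2 →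
      ((((g : N × Set.Ioc (0:ℝ) 1 → N × Set.Ioc (0:ℝ) 1)^[k] q).2 : ℝ) ≤ 1/3 ∨
       (((g : N × Set.Ioc (0:ℝ) 1 → N × Set.Ioc (0:ℝ) 1)^[k] q).2 : ℝ) ≤ 1/2 - k * δ) := by
    intro k
    induction k with
    | zero => intro q hq; right; simpa using hq
    | succ k ih =>
      intro q hq
      rcases ih q hq with h | h
      · left
        rw [Function.iterate_succ_apply']
        exact le_trans (hle _) h
      · set r := (g : N × Set.Ioc (0:ℝ) 1 → N × Set.Ioc (0:ℝ) 1)^[k] q with hr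
        by_cases h13 : (r.2 : ℝ) ≤ 1/3
        · left
          rw [Function.iterate_succ_apply']
          exact le_trans (hle _) h13
        · right
          push_neg at h13
          have hrC : r ∈ C :=
            ⟨Set.mem_univ _, ⟨le_of_lt h13, by nlinarith [hδpos, Nat.cast_nonneg (α := ℝ) k]⟩⟩
          have hmin : δ ≤ (r.2 : ℝ) - ((g r).2 : ℝ) := hq₀min hrC
          rw [Function.iterate_succ_apply']
          push_cast
          nlinarith [Nat.cast_nonneg (α := ℝ) k]
  obtain ⟨p, hp⟩ := exists_nat_ge ((1/6) / δ)
  refine ⟨p, fun q hq => ?_⟩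
  rcases key p q hq with h | h
  · exact h
  · have h16 : 1/6 ≤ (p : ℝ) * δ := by
      rw [div_le_iff₀ hδpos] at hp
      linarith
    linarith
end
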